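/- The set of CL-valid formulas is closed under uniform substitution: if φ is CL-valid and σ is a substitution of formulas for atoms, then σ(φ) is CL-valid. -/
import Mathlib


/- Formalization of Lorenzen dialogue games, following Felscher's presentation.

   Propositional formulas are built from atoms using ¬, ∧, ∨, →.  A dialogue
   for a formula φ is a sequence of moves beginning with Proponent (P)
   asserting φ at position 0, with O moving at odd positions and P at even
   positions.  Each later move attacks or defends an earlier move of the other
   player, according to the particle rules.  Structural rules (D10, D11, D12,
   D13, E, and the variants D10*, D10′) constrain dialogues further.  P wins
   if P made the last move and no moves are available to O; φ is S-valid if P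
   has an S-winning strategy for φ. -/

namespace LorenzenDialogues

/-- Propositional formulas: atoms, ¬, ∧, ∨, →. -/
inductive Formula : Type
  | atom : ℕ → Formula
  | neg  : Formula → Formula
  | and  : Formula → Formula → Formula
  | or   : Formula → Formula → Formula
  | imp  : Formula → Formula → Formula
deriving DecidableEq

/-- Statements: formulas together with the symbolic attacks `?`, `∧_L`, `∧_R`. -/
inductive Statement : Type
  | form  : Formula → Statement
  | qmark : Statement
  | andL  : Statement
  | andR  : Statement
deriving DecidableEq

/-- Particle rules, attack part: which statements attack which formulas. -/
inductive Attacks : Statement → Formula → Prop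
  | andL (a b : Formula) : Attacks .andL (.and a b)
  | andR (a b : Formula) : Attacks .andR (.and a b)
  | qmark (a b : Formula) : Attacks .qmark (.or a b)
  | imp (a b : Formula) : Attacks (.form a) (.imp a b)
  | neg (a : Formula) : Attacks (.form a) (.neg a)

/-- Particle rules, defense part: `Defends χ a s` means `s` is a permitted
    defense of the formula `χ` against the attack `a`.  (A negation admits
    no defense.) -/
inductive Defends : Formula → Statement → Statement → Prop
  | andL (a b : Formula) : Defends (.and a b) .andL (.form a)
  | andR (a b : Formula) : Defends (.and a b) .andR (.form b)
  | orL (a b : Formula) : Defends (.or a b) .qmark (.form a)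
  | orR (a b : Formula) : Defends (.or a b) .qmark (.form b)
  | imp (a b : Formula) : Defends (.imp a b) (.form a) (.form b)

/-- A move: a statement, a flag recording whether it is an attack (`true`)
    or a defense (`false`), and the position of the earlier move it attacks,
    resp. the earlier attack it defends against. -/
structure Move : Type where
  statement : Statement
  isAttack : Bool
  ref : ℕ
deriving DecidableEq

/-- A dialogue: the initial formula asserted by P at position 0, followed by
    the list of later moves (the move at list index `i` occupies position
    `i + 1`; O moves at odd positions, P at even positions). -/
structure Dialogue : Type where
  initial : Formula
  moves : List Move

/-- The statement asserted at position `n` (if any). -/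
def Dialogue.stmtAt (d : Dialogue) (n : ℕ) : Option Statement :=
  if n = 0 then some (.form d.initial) else (d.moves[n - 1]?).map Move.statement

/-- The move at position `n ≥ 1` (if any); position 0 is the initial assertion,
    not a move. -/
def Dialogue.moveAt (d : Dialogue) (n : ℕ) : Option Move :=
  if n = 0 then none else d.moves[n - 1]?

/-- The move `m`, played at position `n ≥ 1`, is permitted by the particle
    rules: it refers to an earlier position of the other player; if it is an
    attack, it attacks a formula asserted there, and if it is a defense, it
    responds to an attack played there, as the particle rules prescribe. -/
def MoveOK (d : Dialogue) (n : ℕ) (m : Move) : Prop :=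
  m.ref < n ∧ m.ref % 2 ≠ n % 2 ∧
    (m.isAttack = true →
      ∃ ψ, d.stmtAt m.ref = some (.form ψ) ∧ Attacks m.statement ψ) ∧
    (m.isAttack = false →
      ∃ a χ, d.moveAt m.ref = some a ∧ a.isAttack = true ∧
        d.stmtAt a.ref = some (.form χ) ∧ Defends χ a.statement m.statement)

/-- The dialogue adheres to the particle rules (every move is legal). -/
def ParticleOK (d : Dialogue) : Prop :=
  ∀ i m, d.moves[i]? = some m → MoveOK d (i + 1) m

/-- Position `n` carries a defense of the attack made at position `r`. -/
def IsDefenseOf (d : Dialogue) (n r : ℕ) : Prop :=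
  ∃ m, d.moveAt n = some m ∧ m.isAttack = false ∧ m.ref = r

/-- Position `n` carries an attack on the assertion made at position `r`. -/
def IsAttackOn (d : Dialogue) (n r : ℕ) : Prop :=
  ∃ m, d.moveAt n = some m ∧ m.isAttack = true ∧ m.ref = r

/-- Position `n` carries an attack. -/
def IsAttackPos (d : Dialogue) (n : ℕ) : Prop :=
  ∃ m, d.moveAt n = some m ∧ m.isAttack = true

/-- The attack at position `r` is still open (no defense against it has yet
    been played) before position `k`. -/
def OpenAt (d : Dialogue) (r k : ℕ) : Prop :=
  IsAttackPos d r ∧ ¬ ∃ j, j < k ∧ IsDefenseOf d j r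

/-- (D10) P may assert an atomic formula only after it has been asserted by O
    before. -/
def D10 (d : Dialogue) : Prop :=
  ∀ n p, n % 2 = 0 → d.stmtAt n = some (.form (.atom p)) →
    ∃ j, j < n ∧ j % 2 = 1 ∧ d.stmtAt j = some (.form (.atom p))

/-- (D10*) P may assert an atom `p` only if O has asserted `p` or `¬p`
    before. -/
def D10star (d : Dialogue) : Prop :=
  ∀ n p, n % 2 = 0 → d.stmtAt n = some (.form (.atom p)) →
    ∃ j, j < n ∧ j % 2 = 1 ∧
      (d.stmtAt j = some (.form (.atom p)) ∨
        d.stmtAt j = some (.form (.neg (.atom p))))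

/-- (D10′) P may assert an atom `p` only if O has asserted `p` or `¬¬p`
    before. -/
def D10prime (d : Dialogue) : Prop :=
  ∀ n p, n % 2 = 0 → d.stmtAt n = some (.form (.atom p)) →
    ∃ j, j < n ∧ j % 2 = 1 ∧
      (d.stmtAt j = some (.form (.atom p)) ∨
        d.stmtAt j = some (.form (.neg (.neg (.atom p)))))

/-- (D11) When defending, only the most recent open attack may be responded
    to: the attack defended against is open, and no strictly more recent open
    attack (against the same player) exists. -/
def D11 (d : Dialogue) : Prop :=
  ∀ n r, IsDefenseOf d n r →
    OpenAt d r n ∧ ¬ ∃ r', r < r' ∧ r' < n ∧ r' % 2 = r % 2 ∧ OpenAt d r' n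

/-- (D12) An attack may be answered at most once. -/
def D12 (d : Dialogue) : Prop :=
  ∀ n₁ n₂ r, IsDefenseOf d n₁ r → IsDefenseOf d n₂ r → n₁ = n₂

/-- (D13) A P-assertion (made at an even position) may be attacked at most
    once. -/
def D13 (d : Dialogue) : Prop :=
  ∀ n₁ n₂ r, r % 2 = 0 → IsAttackOn d n₁ r → IsAttackOn d n₂ r → n₁ = n₂

/-- (E) O can react only upon the immediately preceding P-statement. -/
def ERule (d : Dialogue) : Prop :=
  ∀ n m, n % 2 = 1 → d.moveAt n = some m → m.ref = n - 1

/-- A ruleset is a set of structural rules, i.e. a predicate on dialogues. -/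
def Ruleset := Dialogue → Prop

/-- Ruleset D = {D10, D11, D12, D13}. -/
def rulesetD : Ruleset := fun d => D10 d ∧ D11 d ∧ D12 d ∧ D13 d

/-- Ruleset E = D ∪ {E}. -/
def rulesetE : Ruleset := fun d => rulesetD d ∧ ERule d

/-- Ruleset CL = E − {D11, D12} = {D10, D13, E}. -/
def rulesetCL : Ruleset := fun d => D10 d ∧ D13 d ∧ ERule d

/-- Ruleset N = D − {D11, D12} = {D10, D13}. -/
def rulesetN : Ruleset := fun d => D10 d ∧ D13 d

/-- Ruleset E* = {D10*, D11, D12, D13, E}. -/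
def rulesetEstar : Ruleset :=
  fun d => D10star d ∧ D11 d ∧ D12 d ∧ D13 d ∧ ERule d

/-- Ruleset E′ = {D10′, D11, D12, D13, E}. -/
def rulesetEprime : Ruleset :=
  fun d => D10prime d ∧ D11 d ∧ D12 d ∧ D13 d ∧ ERule d

/-- An S-dialogue: a dialogue adhering to the particle rules and to the
    structural rules S. -/
def Legal (S : Ruleset) (d : Dialogue) : Prop := ParticleOK d ∧ S d

/-- Extend a dialogue by one move. -/
def Dialogue.extend (d : Dialogue) (m : Move) : Dialogue :=
  ⟨d.initial, d.moves ++ [m]⟩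

/-- The position about to be played. -/
def nextPos (d : Dialogue) : ℕ := d.moves.length + 1

/-- It is P's turn (the next position is even). -/
def PTurn (d : Dialogue) : Prop := nextPos d % 2 = 0

/-- The move `m` legally extends the S-dialogue `d`. -/
def LegalExt (S : Ruleset) (d : Dialogue) (m : Move) : Prop :=
  Legal S (d.extend m)

/-- `PWinningC S C d` holds when P, moving under the additional constraint
    `C` on P's own choices, has a winning strategy in the S-dialogue game
    continuing the dialogue `d`: at P's turn, P has a legal move (satisfying
    `C`) after which P is still winning; at O's turn, every legal O-move
    leads to a position where P is winning (in particular, if no O-move is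
    available, P has won: P made the last move and O cannot move). -/
inductive PWinningC (S : Ruleset) (C : Dialogue → Move → Prop) : Dialogue → Prop
  | pMove (d : Dialogue) (m : Move) (hturn : PTurn d)
      (hm : LegalExt S d m) (hC : C d m)
      (h : PWinningC S C (d.extend m)) : PWinningC S C d
  | oMoves (d : Dialogue) (hturn : ¬ PTurn d)
      (h : ∀ m, LegalExt S d m → PWinningC S C (d.extend m)) :
      PWinningC S C d

/-- P has a winning strategy continuing the S-dialogue `d`. -/
def PWinning (S : Ruleset) (d : Dialogue) : Prop :=
  PWinningC S (fun _ _ => True) d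

/-- `valid S φ` (written `⊨_S φ`): the opening assertion of φ is itself a
    legal S-dialogue and P has an S-winning strategy for φ. -/
def valid (S : Ruleset) (φ : Formula) : Prop :=
  Legal S ⟨φ, []⟩ ∧ PWinning S ⟨φ, []⟩

/-- Derivability in intuitionistic propositional logic (a Hilbert-style
    axiomatization with modus ponens). -/
inductive IProv : Formula → Prop
  | k (a b : Formula) : IProv (.imp a (.imp b a))
  | s (a b c : Formula) :
      IProv (.imp (.imp a (.imp b c)) (.imp (.imp a b) (.imp a c)))
  | andE1 (a b : Formula) : IProv (.imp (.and a b) a)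
  | andE2 (a b : Formula) : IProv (.imp (.and a b) b)
  | andI (a b : Formula) : IProv (.imp a (.imp b (.and a b)))
  | orI1 (a b : Formula) : IProv (.imp a (.or a b))
  | orI2 (a b : Formula) : IProv (.imp b (.or a b))
  | orE (a b c : Formula) :
      IProv (.imp (.imp a c) (.imp (.imp b c) (.imp (.or a b) c)))
  | negI (a b : Formula) :
      IProv (.imp (.imp a b) (.imp (.imp a (.neg b)) (.neg a)))
  | negE (a b : Formula) : IProv (.imp (.neg a) (.imp a b))
  | mp (a b : Formula) : IProv (.imp a b) → IProv a → IProv b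

/-- The stability principle ¬¬p → p for the atom `p`. -/
def stab (p : ℕ) : Formula := .imp (.neg (.neg (.atom p))) (.atom p)

/-- Stable logic: intuitionistic propositional logic plus all instances of
    the stability scheme ¬¬p → p for atoms p, closed under modus ponens. -/
inductive StableProv : Formula → Prop
  | intuit (a : Formula) : IProv a → StableProv a
  | stab (p : ℕ) : StableProv (stab p)
  | mp (a b : Formula) : StableProv (.imp a b) → StableProv a → StableProv b

/-- Boolean evaluation of a formula under a valuation of its atoms. -/
def Formula.eval (v : ℕ → Bool) : Formula → Bool
  | .atom p => v p
  | .neg a => !(a.eval v)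
  | .and a b => a.eval v && b.eval v
  | .or a b => a.eval v || b.eval v
  | .imp a b => !(a.eval v) || b.eval v

/-- A classical tautology: true under every Boolean valuation. -/
def Tautology (φ : Formula) : Prop := ∀ v, φ.eval v = true

/-- Uniform substitution of formulas for atoms, applied homomorphically. -/
def Formula.subst (σ : ℕ → Formula) : Formula → Formula
  | .atom p => σ p
  | .neg a => .neg (a.subst σ)
  | .and a b => .and (a.subst σ) (b.subst σ)
  | .or a b => .or (a.subst σ) (b.subst σ)
  | .imp a b => .imp (a.subst σ) (b.subst σ)

/-- The atoms occurring in a formula. -/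
def Formula.atoms : Formula → List ℕ
  | .atom p => [p]
  | .neg a => a.atoms
  | .and a b => a.atoms ++ b.atoms
  | .or a b => a.atoms ++ b.atoms
  | .imp a b => a.atoms ++ b.atoms

/-- Conjunction of a nonempty list of formulas. -/
def conjList (f : Formula) : List Formula → Formula
  | [] => f
  | g :: gs => .and f (conjList g gs)

/-- The conjunction (¬¬p → p) ∧ … of stability instances for the atoms
    `p :: ps`. -/
def stabConj (p : ℕ) (ps : List ℕ) : Formula :=
  conjList (stab p) (ps.map stab)


/-! ### Auxiliary development for uniform substitution -/

section UniformSubstitution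

/-- Size of a formula. -/
def fsize : Formula → ℕ
  | .atom _ => 1
  | .neg a => fsize a + 1
  | .and a b => fsize a + fsize b + 1
  | .or a b => fsize a + fsize b + 1
  | .imp a b => fsize a + fsize b + 1

lemma fsize_pos (φ : Formula) : 0 < fsize φ := by
  cases φ <;> simp only [fsize] <;> omega

variable (σ : ℕ → Formula)

/-- Substitution on statements. -/
def sStmt : Statement → Statement
  | .form ψ => .form (ψ.subst σ)
  | .qmark => .qmark
  | .andL => .andL
  | .andR => .andR

/-- Substitution on moves. -/
def sMove (m : Move) : Move := ⟨sStmt σ m.statement, m.isAttack, m.ref⟩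

/-- Substitution on dialogues. -/
def sDial (d : Dialogue) : Dialogue := ⟨d.initial.subst σ, d.moves.map (sMove σ)⟩

@[simp] lemma sMove_isAttack (m : Move) : (sMove σ m).isAttack = m.isAttack := rfl
@[simp] lemma sMove_ref (m : Move) : (sMove σ m).ref = m.ref := rfl
@[simp] lemma sMove_statement (m : Move) : (sMove σ m).statement = sStmt σ m.statement := rfl
@[simp] lemma sDial_length (d : Dialogue) : (sDial σ d).moves.length = d.moves.length := by
  simp [sDial]

@[simp] lemma extend_length (d : Dialogue) (m : Move) :
    (d.extend m).moves.length = d.moves.length + 1 := by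
  simp [Dialogue.extend]

lemma stmtAt_sDial (d : Dialogue) (n : ℕ) :
    (sDial σ d).stmtAt n = (d.stmtAt n).map (sStmt σ) := by
  unfold Dialogue.stmtAt
  split
  · rfl
  · cases h : d.moves[n-1]? <;>
      simp [sDial, List.getElem?_map, h, sMove]

lemma moveAt_sDial (d : Dialogue) (n : ℕ) :
    (sDial σ d).moveAt n = (d.moveAt n).map (sMove σ) := by
  unfold Dialogue.moveAt
  split
  · rfl
  · simp [sDial, List.getElem?_map]

lemma sDial_extend (d : Dialogue) (m : Move) :
    sDial σ (d.extend m) = (sDial σ d).extend (sMove σ m) := by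
  simp [sDial, Dialogue.extend]

end UniformSubstitution


section IndexLemmas

lemma stmtAt_extend_le {d : Dialogue} {m : Move} {n : ℕ} (h : n ≤ d.moves.length) :
    (d.extend m).stmtAt n = d.stmtAt n := by
  unfold Dialogue.stmtAt
  split
  · rfl
  · rename_i hn
    show (d.moves ++ [m])[n-1]?.map _ = _
    rw [List.getElem?_append_left (by omega)]

lemma moveAt_extend_le {d : Dialogue} {m : Move} {n : ℕ} (h : n ≤ d.moves.length) :
    (d.extend m).moveAt n = d.moveAt n := by
  unfold Dialogue.moveAt
  split
  · rfl
  · rename_i hn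
    show (d.moves ++ [m])[n-1]? = _
    rw [List.getElem?_append_left (by omega)]

lemma getElem?_extend_eq {d : Dialogue} {m : Move} {i : ℕ} (h : i = d.moves.length) :
    (d.extend m).moves[i]? = some m := by
  subst h
  show (d.moves ++ [m])[d.moves.length]? = some m
  rw [List.getElem?_concat_length]

lemma moveAt_extend_eq {d : Dialogue} {m : Move} {n : ℕ} (h : n = d.moves.length + 1) :
    (d.extend m).moveAt n = some m := by
  unfold Dialogue.moveAt
  rw [if_neg (by omega)]
  have : n - 1 = d.moves.length := by omega
  rw [this, getElem?_extend_eq rfl]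

lemma stmtAt_extend_eq {d : Dialogue} {m : Move} {n : ℕ} (h : n = d.moves.length + 1) :
    (d.extend m).stmtAt n = some m.statement := by
  unfold Dialogue.stmtAt
  rw [if_neg (by omega)]
  have : n - 1 = d.moves.length := by omega
  rw [this, getElem?_extend_eq rfl]
  rfl

lemma stmtAt_some_le {d : Dialogue} {n : ℕ} {s : Statement} (h : d.stmtAt n = some s) :
    n ≤ d.moves.length := by
  unfold Dialogue.stmtAt at h
  split at h
  · omega
  · rename_i hn
    cases hg : d.moves[n-1]? with
    | none => rw [hg] at h; cases h
    | some m₀ =>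
      obtain ⟨hlt, -⟩ := List.getElem?_eq_some_iff.mp hg
      omega

lemma moveAt_some_le {d : Dialogue} {n : ℕ} {m₀ : Move} (h : d.moveAt n = some m₀) :
    1 ≤ n ∧ n ≤ d.moves.length := by
  unfold Dialogue.moveAt at h
  split at h
  · cases h
  · rename_i hn
    obtain ⟨hlt, -⟩ := List.getElem?_eq_some_iff.mp h
    omega

lemma stmtAt_of_moveAt {d : Dialogue} {n : ℕ} {m₀ : Move} (h : d.moveAt n = some m₀) :
    d.stmtAt n = some m₀.statement := by
  unfold Dialogue.moveAt at h
  unfold Dialogue.stmtAt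
  split at h
  · cases h
  · rename_i hn
    rw [if_neg hn, h]
    rfl

lemma moveAt_eq_getElem? {d : Dialogue} {n : ℕ} (h : n ≠ 0) :
    d.moveAt n = d.moves[n-1]? := by
  unfold Dialogue.moveAt
  rw [if_neg h]

end IndexLemmas


section TransferLemmas

variable (σ : ℕ → Formula)

lemma attacks_sStmt {s : Statement} {ψ : Formula} (h : Attacks s ψ) :
    Attacks (sStmt σ s) (ψ.subst σ) := by
  cases h with
  | andL a b => exact .andL _ _
  | andR a b => exact .andR _ _
  | qmark a b => exact .qmark _ _
  | imp a b => exact .imp _ _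
  | neg a => exact .neg _

lemma defends_sStmt {χ : Formula} {a s : Statement} (h : Defends χ a s) :
    Defends (χ.subst σ) (sStmt σ a) (sStmt σ s) := by
  cases h with
  | andL a b => exact .andL _ _
  | andR a b => exact .andR _ _
  | orL a b => exact .orL _ _
  | orR a b => exact .orR _ _
  | imp a b => exact .imp _ _

lemma attacks_back {ψ : Formula} (hψ : ∀ p, ψ ≠ .atom p) {s' : Statement}
    (h : Attacks s' (ψ.subst σ)) : ∃ s, sStmt σ s = s' ∧ Attacks s ψ := by
  cases ψ with
  | atom p => exact absurd rfl (hψ p)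
  | neg a => cases h; exact ⟨.form a, rfl, .neg a⟩
  | and a b =>
      cases h
      · exact ⟨.andL, rfl, .andL a b⟩
      · exact ⟨.andR, rfl, .andR a b⟩
  | or a b => cases h; exact ⟨.qmark, rfl, .qmark a b⟩
  | imp a b => cases h; exact ⟨.form a, rfl, .imp a b⟩

lemma defends_back {χ : Formula} {a s' : Statement} (ha : Attacks a χ)
    (h : Defends (χ.subst σ) (sStmt σ a) s') :
    ∃ s, sStmt σ s = s' ∧ Defends χ a s := by
  cases ha with
  | andL a b => cases h; exact ⟨.form a, rfl, .andL a b⟩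
  | andR a b => cases h; exact ⟨.form b, rfl, .andR a b⟩
  | qmark a b =>
      cases h
      · exact ⟨.form a, rfl, .orL a b⟩
      · exact ⟨.form b, rfl, .orR a b⟩
  | imp a b => cases h; exact ⟨.form b, rfl, .imp a b⟩
  | neg a => cases h

lemma subst_eq_atom {ψ : Formula} {q : ℕ} (h : ψ.subst σ = .atom q) :
    ∃ p, ψ = .atom p := by
  cases ψ with
  | atom p => exact ⟨p, rfl⟩
  | neg a => simp [Formula.subst] at h
  | and a b => simp [Formula.subst] at h
  | or a b => simp [Formula.subst] at h
  | imp a b => simp [Formula.subst] at h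

lemma sStmt_eq_form {s : Statement} {τ : Formula} (h : sStmt σ s = .form τ) :
    ∃ ψ, s = .form ψ ∧ ψ.subst σ = τ := by
  cases s with
  | form ψ => exact ⟨ψ, rfl, by injection h⟩
  | qmark => simp [sStmt] at h
  | andL => simp [sStmt] at h
  | andR => simp [sStmt] at h

lemma attacks_form {ψ' χ : Formula} (h : Attacks (.form ψ') χ) :
    fsize ψ' < fsize χ := by
  cases h <;> simp only [fsize] <;> omega

lemma defends_form {χ : Formula} {a s : Statement} (h : Defends χ a s) :
    ∃ τ, s = .form τ ∧ fsize τ < fsize χ := by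
  cases h <;> exact ⟨_, rfl, by simp only [fsize]; omega⟩

end TransferLemmas


section RuleTransfer

variable (σ : ℕ → Formula)

lemma moveOK_sDial {d : Dialogue} {n : ℕ} {m : Move} (h : MoveOK d n m) :
    MoveOK (sDial σ d) n (sMove σ m) := by
  obtain ⟨h1, h2, h3, h4⟩ := h
  refine ⟨h1, h2, ?_, ?_⟩
  · intro hA
    obtain ⟨ψ, hs, ha⟩ := h3 hA
    refine ⟨ψ.subst σ, ?_, attacks_sStmt σ ha⟩
    rw [sMove_ref, stmtAt_sDial, hs]; rfl
  · intro hA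
    obtain ⟨a, χ, hma, haA, hs, hd⟩ := h4 hA
    refine ⟨sMove σ a, χ.subst σ, ?_, haA, ?_, defends_sStmt σ hd⟩
    · rw [sMove_ref, moveAt_sDial, hma]; rfl
    · rw [sMove_ref, stmtAt_sDial, hs]; rfl

lemma moveOK_extend {d : Dialogue} {n : ℕ} {m₀ m : Move} (h : MoveOK d n m₀) :
    MoveOK (d.extend m) n m₀ := by
  obtain ⟨h1, h2, h3, h4⟩ := h
  refine ⟨h1, h2, ?_, ?_⟩
  · intro hA
    obtain ⟨ψ, hs, ha⟩ := h3 hA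
    exact ⟨ψ, by rw [stmtAt_extend_le (stmtAt_some_le hs)]; exact hs, ha⟩
  · intro hA
    obtain ⟨a, χ, hma, haA, hs, hd⟩ := h4 hA
    exact ⟨a, χ, by rw [moveAt_extend_le (moveAt_some_le hma).2]; exact hma, haA,
      by rw [stmtAt_extend_le (stmtAt_some_le hs)]; exact hs, hd⟩

lemma particleOK_extend {d : Dialogue} {m : Move} (h : ParticleOK d)
    (hm : MoveOK (d.extend m) (d.moves.length + 1) m) : ParticleOK (d.extend m) := by
  intro i m₀ hi
  rcases Nat.lt_or_ge i d.moves.length with hlt | hge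
  · have : d.moves[i]? = some m₀ := by
      rw [show (d.extend m).moves = d.moves ++ [m] from rfl,
        List.getElem?_append_left hlt] at hi
      exact hi
    exact moveOK_extend (h i m₀ this)
  · have hie : i = d.moves.length := by
      have : i < (d.extend m).moves.length := (List.getElem?_eq_some_iff.mp hi).1
      rw [extend_length] at this; omega
    have : m₀ = m := by
      rw [getElem?_extend_eq hie] at hi; exact (Option.some_inj.mp hi).symm
    subst this; rw [hie]; exact hm

lemma particleOK_sDial {d : Dialogue} (h : ParticleOK d) : ParticleOK (sDial σ d) := by
  intro i m' hm'
  rw [show (sDial σ d).moves = d.moves.map (sMove σ) from rfl, List.getElem?_map] at hm'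
  cases hg : d.moves[i]? with
  | none => rw [hg] at hm'; cases hm'
  | some m₀ =>
    rw [hg] at hm'
    have : m' = sMove σ m₀ := (Option.some_inj.mp hm').symm
    subst this
    exact moveOK_sDial σ (h i m₀ hg)

lemma isAttackOn_sDial {d : Dialogue} {n r : ℕ} :
    IsAttackOn (sDial σ d) n r ↔ IsAttackOn d n r := by
  unfold IsAttackOn
  rw [moveAt_sDial]
  cases h : d.moveAt n <;> simp

lemma D13_sDial {d : Dialogue} : D13 (sDial σ d) ↔ D13 d := by
  unfold D13
  constructor
  · intro h n₁ n₂ r hr h1 h2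
    exact h n₁ n₂ r hr ((isAttackOn_sDial σ).mpr h1) ((isAttackOn_sDial σ).mpr h2)
  · intro h n₁ n₂ r hr h1 h2
    exact h n₁ n₂ r hr ((isAttackOn_sDial σ).mp h1) ((isAttackOn_sDial σ).mp h2)

lemma ERule_sDial {d : Dialogue} : ERule (sDial σ d) ↔ ERule d := by
  unfold ERule
  constructor
  · intro h n m hn hm
    have : (sDial σ d).moveAt n = some (sMove σ m) := by rw [moveAt_sDial, hm]; rfl
    exact h n (sMove σ m) hn this
  · intro h n m hn hm
    rw [moveAt_sDial] at hm
    cases hg : d.moveAt n with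
    | none => rw [hg] at hm; cases hm
    | some m₀ =>
      rw [hg] at hm
      have : m = sMove σ m₀ := (Option.some_inj.mp hm).symm
      subst this
      rw [sMove_ref]
      exact h n m₀ hn hg

lemma D10_sDial {d : Dialogue} (h : D10 d) : D10 (sDial σ d) := by
  intro n p hn hs
  rw [stmtAt_sDial] at hs
  cases hst : d.stmtAt n with
  | none => rw [hst] at hs; cases hs
  | some s₀ =>
    rw [hst] at hs
    obtain ⟨ψ, rfl, hψ⟩ := sStmt_eq_form σ (Option.some_inj.mp hs)
    obtain ⟨q, rfl⟩ := subst_eq_atom σ hψ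
    obtain ⟨j, hj1, hj2, hj3⟩ := h n q hn hst
    refine ⟨j, hj1, hj2, ?_⟩
    rw [stmtAt_sDial, hj3]
    simp only [Option.map_some]
    show some (Statement.form ((Formula.atom q).subst σ)) = some (Statement.form (Formula.atom p))
    rw [hψ]

lemma legal_sDial {d : Dialogue} (h : Legal rulesetCL d) : Legal rulesetCL (sDial σ d) := by
  obtain ⟨hp, h10, h13, hE⟩ := h
  exact ⟨particleOK_sDial σ hp, D10_sDial σ h10, (D13_sDial σ).mpr h13, (ERule_sDial σ).mpr hE⟩

lemma D10_extend {d : Dialogue} {m : Move} (h : D10 d)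
    (hnew : (d.moves.length + 1) % 2 = 0 → ∀ q, m.statement = .form (.atom q) →
      ∃ j, j < d.moves.length + 1 ∧ j % 2 = 1 ∧ d.stmtAt j = some (.form (.atom q))) :
    D10 (d.extend m) := by
  intro n p hn hs
  have hle := stmtAt_some_le hs
  rw [extend_length] at hle
  rcases Nat.lt_or_ge n (d.moves.length + 1) with h1 | h1
  · rw [stmtAt_extend_le (by omega)] at hs
    obtain ⟨j, hj1, hj2, hj3⟩ := h n p hn hs
    exact ⟨j, hj1, hj2, by rw [stmtAt_extend_le (by omega)]; exact hj3⟩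
  · have hne : n = d.moves.length + 1 := by omega
    rw [stmtAt_extend_eq hne] at hs
    have hms : m.statement = .form (.atom p) := Option.some_inj.mp hs
    obtain ⟨j, hj1, hj2, hj3⟩ := hnew (hne ▸ hn) p hms
    exact ⟨j, by omega, hj2, by rw [stmtAt_extend_le (by omega)]; exact hj3⟩

lemma D13_extend {d : Dialogue} {m : Move} (h : D13 d)
    (hm : m.isAttack = true → m.ref % 2 = 1) : D13 (d.extend m) := by
  have key : ∀ n r, IsAttackOn (d.extend m) n r → r % 2 = 0 → IsAttackOn d n r := by
    rintro n r ⟨m₀, hm₀, hA, hrf⟩ hr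
    obtain ⟨hn1, hn2⟩ := moveAt_some_le hm₀
    rw [extend_length] at hn2
    rcases Nat.lt_or_ge n (d.moves.length + 1) with h1 | h1
    · rw [moveAt_extend_le (by omega)] at hm₀
      exact ⟨m₀, hm₀, hA, hrf⟩
    · have : n = d.moves.length + 1 := by omega
      rw [moveAt_extend_eq this] at hm₀
      have : m₀ = m := (Option.some_inj.mp hm₀).symm
      subst this
      have := hm hA
      omega
  intro n₁ n₂ r hr h1 h2
  exact h n₁ n₂ r hr (key n₁ r h1 hr) (key n₂ r h2 hr)

lemma ERule_extend {d : Dialogue} {m : Move} (h : ERule d)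
    (hm : (d.moves.length + 1) % 2 = 1 → m.ref = d.moves.length) :
    ERule (d.extend m) := by
  intro n m₀ hn hm₀
  obtain ⟨hn1, hn2⟩ := moveAt_some_le hm₀
  rw [extend_length] at hn2
  rcases Nat.lt_or_ge n (d.moves.length + 1) with h1 | h1
  · rw [moveAt_extend_le (by omega)] at hm₀
    exact h n m₀ hn hm₀
  · have hne : n = d.moves.length + 1 := by omega
    rw [moveAt_extend_eq hne] at hm₀
    have : m₀ = m := (Option.some_inj.mp hm₀).symm
    subst this
    rw [hm (hne ▸ hn)]
    omega

end RuleTransfer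


section GameHelpers

lemma moveOK_attack {d : Dialogue} {n : ℕ} {s : Statement} {r' : ℕ} {χ : Formula}
    (h1 : r' < n) (h2 : r' % 2 ≠ n % 2)
    (h3 : d.stmtAt r' = some (.form χ)) (h4 : Attacks s χ) :
    MoveOK d n ⟨s, true, r'⟩ :=
  ⟨h1, h2, fun _ => ⟨χ, h3, h4⟩, fun hc => absurd hc (by simp)⟩

lemma moveOK_defense {d : Dialogue} {n : ℕ} {s : Statement} {r' : ℕ} {a : Move} {χ : Formula}
    (h1 : r' < n) (h2 : r' % 2 ≠ n % 2) (hma : d.moveAt r' = some a)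
    (haA : a.isAttack = true) (hs : d.stmtAt a.ref = some (.form χ))
    (hd : Defends χ a.statement s) :
    MoveOK d n ⟨s, false, r'⟩ :=
  ⟨h1, h2, fun hc => absurd hc (by simp), fun _ => ⟨a, χ, hma, haA, hs, hd⟩⟩

lemma legal_extend {d : Dialogue} {m : Move} (hleg : Legal rulesetCL d)
    (hok : MoveOK (d.extend m) (d.moves.length + 1) m)
    (h10 : (d.moves.length + 1) % 2 = 0 → ∀ q, m.statement = .form (.atom q) →
      ∃ j, j < d.moves.length + 1 ∧ j % 2 = 1 ∧ d.stmtAt j = some (.form (.atom q)))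
    (h13 : m.isAttack = true → m.ref % 2 = 1)
    (hE : (d.moves.length + 1) % 2 = 1 → m.ref = d.moves.length) :
    Legal rulesetCL (d.extend m) := by
  obtain ⟨hp, hd10, hd13, hdE⟩ := hleg
  exact ⟨particleOK_extend hp hok, D10_extend hd10 h10, D13_extend hd13 h13,
    ERule_extend hdE hE⟩

lemma pwin_step (d : Dialogue) (m : Move) (hturn : (d.moves.length + 1) % 2 = 0)
    (hleg : Legal rulesetCL (d.extend m))
    (h : ∀ m₂, Legal rulesetCL ((d.extend m).extend m₂) →
      PWinning rulesetCL ((d.extend m).extend m₂)) :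
    PWinning rulesetCL d := by
  show PWinningC rulesetCL (fun _ _ => True) d
  refine PWinningC.pMove d m hturn hleg trivial ?_
  refine PWinningC.oMoves _ ?_ ?_
  · simp only [PTurn, nextPos, extend_length]
    omega
  · intro m₂ hm₂
    exact h m₂ hm₂

end GameHelpers

section Copycat

lemma copycat : ∀ (k : ℕ) (χ : Formula), fsize χ ≤ k →
    ∀ (e : Dialogue) (mo : Move) (r : ℕ),
    Legal rulesetCL e →
    (e.moves.length + 1) % 2 = 0 →
    e.moveAt e.moves.length = some mo →
    mo.isAttack = true →
    e.stmtAt mo.ref = some (.form χ) →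
    Attacks mo.statement χ →
    r % 2 = 1 → r < e.moves.length →
    e.stmtAt r = some (.form χ) →
    PWinning rulesetCL e := by
  intro k
  induction k with
  | zero =>
    intro χ hχ
    exact absurd hχ (by have := fsize_pos χ; omega)
  | succ k ih =>
    intro χ hχ e mo r hleg hpar hmo hmoA hmoT hatt hr1 hr2 hr3
    have hLodd : e.moves.length % 2 = 1 := by omega
    have hrefle : mo.ref ≤ e.moves.length := stmtAt_some_le hmoT
    have hstL : e.stmtAt e.moves.length = some mo.statement := stmtAt_of_moveAt hmo
    -- P attacks O's earlier assertion of χ (at position r) with the same attack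
    have hMok : MoveOK (e.extend ⟨mo.statement, true, r⟩) (e.moves.length + 1) ⟨mo.statement, true, r⟩ :=
      moveOK_attack (by omega) (by omega)
        (by rw [stmtAt_extend_le (by omega)]; exact hr3) hatt
    have hleg1 : Legal rulesetCL (e.extend ⟨mo.statement, true, r⟩) := by
      refine legal_extend hleg hMok ?_ ?_ ?_
      · intro _ q hq
        exact ⟨e.moves.length, by omega, hLodd, by rw [hstL]; exact congrArg some hq⟩
      · intro _; exact hr1
      · intro hc; exact absurd hpar (by omega)
    refine pwin_step e ⟨mo.statement, true, r⟩ hpar hleg1 ?_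
    intro m₂ hm₂x
    have hm₂l : Legal rulesetCL ((e.extend ⟨mo.statement, true, r⟩).extend m₂) := hm₂x
    obtain ⟨hp₂, h10₂, h13₂, hE₂⟩ := hm₂l
    have hlen1 : (e.extend ⟨mo.statement, true, r⟩).moves.length = e.moves.length + 1 := extend_length _ _
    have hlen2 : ((e.extend ⟨mo.statement, true, r⟩).extend m₂).moves.length = e.moves.length + 2 := by simp only [extend_length]
    have hm₂ok : MoveOK ((e.extend ⟨mo.statement, true, r⟩).extend m₂) ((e.extend ⟨mo.statement, true, r⟩).moves.length + 1) m₂ :=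
      hp₂ (e.extend ⟨mo.statement, true, r⟩).moves.length m₂ (getElem?_extend_eq rfl)
    have hm₂ref : m₂.ref = e.moves.length + 1 := by
      have := hE₂ ((e.extend ⟨mo.statement, true, r⟩).moves.length + 1) m₂ (by omega) (moveAt_extend_eq rfl)
      omega
    have hstv : ((e.extend ⟨mo.statement, true, r⟩).extend m₂).stmtAt (e.moves.length + 1) = some mo.statement := by
      rw [stmtAt_extend_le (by omega), stmtAt_extend_eq (by omega)]
    by_cases hA₂ : m₂.isAttack
    · -- O counterattacks P's attack statement: recurse on that (sub)formula
      obtain ⟨ψ', hst, hatt₂⟩ := hm₂ok.2.2.1 hA₂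
      rw [hm₂ref, hstv] at hst
      have hmoeq : mo.statement = .form ψ' := Option.some_inj.mp hst
      have hatt' : Attacks (.form ψ') χ := by rw [← hmoeq]; exact hatt
      have hsize : fsize ψ' < fsize χ := attacks_form hatt'
      refine ih ψ' (by omega) ((e.extend ⟨mo.statement, true, r⟩).extend m₂) m₂ e.moves.length hm₂x (by omega) ?_ hA₂ ?_ hatt₂
        hLodd (by omega) ?_
      · rw [hlen2]
        exact moveAt_extend_eq (by omega)
      · rw [hm₂ref, hstv, hmoeq]
      · rw [stmtAt_extend_le (by omega), stmtAt_extend_le (by omega), hstL, hmoeq]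
    · -- O defends P's attack: P copies the defense for his own attacked assertion
      have hA₂' : m₂.isAttack = false := by revert hA₂; cases m₂.isAttack <;> simp
      obtain ⟨a, χ₀, hma, haA, hsa, hdef⟩ := hm₂ok.2.2.2 hA₂'
      rw [hm₂ref, moveAt_extend_le (by omega), moveAt_extend_eq (by omega)] at hma
      have ha : a = ⟨mo.statement, true, r⟩ := (Option.some_inj.mp hma).symm
      subst ha
      have hsa' : ((e.extend ⟨mo.statement, true, r⟩).extend m₂).stmtAt r = some (.form χ₀) := hsa
      rw [stmtAt_extend_le (by omega), stmtAt_extend_le (by omega), hr3] at hsa'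
      have hχ₀ : χ = χ₀ := by
        have h1 := Option.some_inj.mp hsa'
        injection h1
      subst hχ₀
      have hdef' : Defends χ mo.statement m₂.statement := hdef
      have hMok₃ : MoveOK (((e.extend ⟨mo.statement, true, r⟩).extend m₂).extend ⟨m₂.statement, false, e.moves.length⟩) (((e.extend ⟨mo.statement, true, r⟩).extend m₂).moves.length + 1) ⟨m₂.statement, false, e.moves.length⟩ := by
        refine moveOK_defense (by omega) (by omega) ?_ hmoA ?_ hdef'
        · rw [moveAt_extend_le (by omega), moveAt_extend_le (by omega),
            moveAt_extend_le (by omega)]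
          exact hmo
        · rw [stmtAt_extend_le (by omega), stmtAt_extend_le (by omega),
            stmtAt_extend_le (by omega)]
          exact hmoT
      have hleg3 : Legal rulesetCL (((e.extend ⟨mo.statement, true, r⟩).extend m₂).extend ⟨m₂.statement, false, e.moves.length⟩) := by
        refine legal_extend hm₂x hMok₃ ?_ ?_ ?_
        · intro _ q hq
          refine ⟨((e.extend ⟨mo.statement, true, r⟩).extend m₂).moves.length, by omega, by omega, ?_⟩
          rw [stmtAt_extend_eq (by omega)]
          exact congrArg some hq
        · intro hc; exact absurd hc (by simp)
        · intro hc; exact absurd hpar (by omega)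
      refine pwin_step ((e.extend ⟨mo.statement, true, r⟩).extend m₂) ⟨m₂.statement, false, e.moves.length⟩ (by omega) hleg3 ?_
      intro m₄ hm₄x
      have hm₄l : Legal rulesetCL ((((e.extend ⟨mo.statement, true, r⟩).extend m₂).extend ⟨m₂.statement, false, e.moves.length⟩).extend m₄) := hm₄x
      obtain ⟨hp₄, h10₄, h13₄, hE₄⟩ := hm₄l
      have hlen3 : (((e.extend ⟨mo.statement, true, r⟩).extend m₂).extend ⟨m₂.statement, false, e.moves.length⟩).moves.length = e.moves.length + 3 := by simp only [extend_length]
      have hm₄ok : MoveOK ((((e.extend ⟨mo.statement, true, r⟩).extend m₂).extend ⟨m₂.statement, false, e.moves.length⟩).extend m₄) ((((e.extend ⟨mo.statement, true, r⟩).extend m₂).extend ⟨m₂.statement, false, e.moves.length⟩).moves.length + 1) m₄ :=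
        hp₄ (((e.extend ⟨mo.statement, true, r⟩).extend m₂).extend ⟨m₂.statement, false, e.moves.length⟩).moves.length m₄ (getElem?_extend_eq rfl)
      have hm₄ref : m₄.ref = (((e.extend ⟨mo.statement, true, r⟩).extend m₂).extend ⟨m₂.statement, false, e.moves.length⟩).moves.length := by
        have := hE₄ ((((e.extend ⟨mo.statement, true, r⟩).extend m₂).extend ⟨m₂.statement, false, e.moves.length⟩).moves.length + 1) m₄ (by omega) (moveAt_extend_eq rfl)
        omega
      by_cases hA₄ : m₄.isAttack
      · -- O attacks P's defense statement: recurse on that subformula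
        obtain ⟨τ', hst₄, hatt₄⟩ := hm₄ok.2.2.1 hA₄
        rw [hm₄ref, stmtAt_extend_le (by omega), stmtAt_extend_eq (by omega)] at hst₄
        have hm₂τ : m₂.statement = .form τ' := Option.some_inj.mp hst₄
        obtain ⟨τ, hτeq, hτsize⟩ := defends_form hdef'
        have h5 : Statement.form τ = Statement.form τ' := by rw [← hτeq, hm₂τ]
        have hττ : τ = τ' := by injection h5
        subst hττ
        refine ih τ (by omega) ((((e.extend ⟨mo.statement, true, r⟩).extend m₂).extend ⟨m₂.statement, false, e.moves.length⟩).extend m₄) m₄ ((e.extend ⟨mo.statement, true, r⟩).extend m₂).moves.length hm₄x ?_ ?_ hA₄ ?_ hatt₄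
          (by omega) ?_ ?_
        · simp only [extend_length]; omega
        · rw [show ((((e.extend ⟨mo.statement, true, r⟩).extend m₂).extend ⟨m₂.statement, false, e.moves.length⟩).extend m₄).moves.length = (((e.extend ⟨mo.statement, true, r⟩).extend m₂).extend ⟨m₂.statement, false, e.moves.length⟩).moves.length + 1 from extend_length _ _]
          exact moveAt_extend_eq rfl
        · rw [hm₄ref, stmtAt_extend_le (by omega), stmtAt_extend_eq (by omega)]
          exact congrArg some hτeq
        · simp only [extend_length]; omega
        · rw [stmtAt_extend_le (by omega), stmtAt_extend_le (by omega),
            stmtAt_extend_eq (by omega)]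
          exact congrArg some hτeq
      · -- O cannot defend: the preceding P-move was itself a defense
        have hA₄' : m₄.isAttack = false := by revert hA₄; cases m₄.isAttack <;> simp
        obtain ⟨a₄, χ₄, hma₄, haA₄, -, -⟩ := hm₄ok.2.2.2 hA₄'
        rw [hm₄ref, moveAt_extend_le (by omega), moveAt_extend_eq (by omega)] at hma₄
        have ha₄ : a₄ = ⟨m₂.statement, false, e.moves.length⟩ := (Option.some_inj.mp hma₄).symm
        subst ha₄
        exact absurd haA₄ (by simp)

end Copycat


section Simulation

variable (σ : ℕ → Formula)

lemma sim : ∀ d : Dialogue, PWinning rulesetCL d → Legal rulesetCL d →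
    PWinning rulesetCL (sDial σ d) := by
  intro d hwin
  induction hwin with
  | pMove d m hturn hm hC h ihx =>
    intro hleg
    show PWinningC rulesetCL (fun _ _ => True) (sDial σ d)
    refine PWinningC.pMove _ (sMove σ m) ?_ ?_ trivial ?_
    · show ((sDial σ d).moves.length + 1) % 2 = 0
      rw [sDial_length]
      exact hturn
    · show Legal rulesetCL ((sDial σ d).extend (sMove σ m))
      rw [← sDial_extend]
      exact legal_sDial σ hm
    · rw [← sDial_extend]
      exact ihx hm
  | oMoves d hturn h ihx =>
    intro hleg
    show PWinningC rulesetCL (fun _ _ => True) (sDial σ d)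
    refine PWinningC.oMoves _ ?_ ?_
    · intro hc
      refine hturn ?_
      show (d.moves.length + 1) % 2 = 0
      have hc' : ((sDial σ d).moves.length + 1) % 2 = 0 := hc
      rwa [sDial_length] at hc'
    · intro m' hm'x
      have hm'l : Legal rulesetCL ((sDial σ d).extend m') := hm'x
      obtain ⟨hp', h10', h13', hE'⟩ := hm'l
      have hLev : d.moves.length % 2 = 0 := by
        have hod : ¬ (d.moves.length + 1) % 2 = 0 := hturn
        omega
      have hslen : (sDial σ d).moves.length = d.moves.length := sDial_length σ d
      have hmok : MoveOK ((sDial σ d).extend m') (d.moves.length + 1) m' := by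
        have := hp' (sDial σ d).moves.length m' (getElem?_extend_eq rfl)
        rwa [hslen] at this
      have href : m'.ref = d.moves.length := by
        have := hE' ((sDial σ d).moves.length + 1) m' (by omega) (moveAt_extend_eq rfl)
        omega
      by_cases hA : m'.isAttack
      · -- O attacks the last P statement
        obtain ⟨ψ', hst, hatt⟩ := hmok.2.2.1 hA
        rw [href, stmtAt_extend_le (by omega), stmtAt_sDial] at hst
        cases hd0 : d.stmtAt d.moves.length with
        | none => rw [hd0] at hst; cases hst
        | some s₀ =>
          rw [hd0] at hst
          obtain ⟨ψ₀, rfl, hψ₀⟩ := sStmt_eq_form σ (Option.some_inj.mp hst)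
          by_cases hatom : ∃ p, ψ₀ = .atom p
          · -- the attacked formula substitutes an atom: switch to the copy-cat strategy
            obtain ⟨p, rfl⟩ := hatom
            obtain ⟨j, hj1, hj2, hj3⟩ := hleg.2.1 d.moves.length p hLev hd0
            refine copycat (fsize ψ') ψ' le_rfl ((sDial σ d).extend m') m' j hm'x
              ?_ ?_ hA ?_ hatt hj2 ?_ ?_
            · simp only [extend_length]; omega
            · rw [show ((sDial σ d).extend m').moves.length
                = (sDial σ d).moves.length + 1 from extend_length _ _]
              exact moveAt_extend_eq rfl
            · rw [href, stmtAt_extend_le (by omega), stmtAt_sDial, hd0]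
              show some (Statement.form ((Formula.atom p).subst σ))
                = some (Statement.form ψ')
              rw [hψ₀]
            · simp only [extend_length]; omega
            · rw [stmtAt_extend_le (by omega), stmtAt_sDial, hj3]
              show some (Statement.form ((Formula.atom p).subst σ))
                = some (Statement.form ψ')
              rw [hψ₀]
          · -- compound formula: translate the attack back
            have hne : ∀ p, ψ₀ ≠ .atom p := by
              intro p hp; exact hatom ⟨p, hp⟩
            have hatt' : Attacks m'.statement (ψ₀.subst σ) := by rw [hψ₀]; exact hatt
            obtain ⟨s, hs, hatt₀⟩ := attacks_back σ hne hatt'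
            have hsm : sMove σ ⟨s, true, d.moves.length⟩ = m' := by
              cases m' with
              | mk st' b' r' =>
                obtain rfl : b' = true := hA
                obtain rfl : r' = d.moves.length := href
                obtain rfl : st' = sStmt σ s := hs.symm
                rfl
            have hmokd : MoveOK (d.extend ⟨s, true, d.moves.length⟩) (d.moves.length + 1)
                ⟨s, true, d.moves.length⟩ :=
              moveOK_attack (by omega) (by omega)
                (by rw [stmtAt_extend_le (by omega)]; exact hd0) hatt₀
            have hlegd : Legal rulesetCL (d.extend ⟨s, true, d.moves.length⟩) := by
              refine ⟨particleOK_extend hleg.1 hmokd, D10_extend hleg.2.1 ?_, ?_, ?_⟩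
              · intro hc; exact absurd hc (by omega)
              · have h13i := h13'
                rw [← hsm, ← sDial_extend] at h13i
                exact (D13_sDial σ).mp h13i
              · have hEi := hE'
                rw [← hsm, ← sDial_extend] at hEi
                exact (ERule_sDial σ).mp hEi
            have hfin := ihx ⟨s, true, d.moves.length⟩ hlegd hlegd
            rw [sDial_extend, hsm] at hfin
            exact hfin
      · -- O defends: translate the defense back
        have hA' : m'.isAttack = false := by revert hA; cases m'.isAttack <;> simp
        obtain ⟨a, χ', hma, haA, hsa, hdef⟩ := hmok.2.2.2 hA'
        rw [href, moveAt_extend_le (by omega), moveAt_sDial] at hma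
        cases hmp : d.moveAt d.moves.length with
        | none => rw [hmp] at hma; cases hma
        | some mp =>
          rw [hmp] at hma
          have ha : a = sMove σ mp := (Option.some_inj.mp hma).symm
          subst ha
          have hmpA : mp.isAttack = true := haA
          have h1le : 1 ≤ d.moves.length := (moveAt_some_le hmp).1
          have hmpok : MoveOK d d.moves.length mp := by
            have hg : d.moves[d.moves.length - 1]? = some mp := by
              rw [← moveAt_eq_getElem? (by omega)]; exact hmp
            have := hleg.1 (d.moves.length - 1) mp hg
            rwa [Nat.sub_add_cancel h1le] at this
          obtain ⟨χ₁, hs₁, hatt₁⟩ := hmpok.2.2.1 hmpA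
          have hmprlt : mp.ref < d.moves.length := hmpok.1
          have hsa' : ((sDial σ d).extend m').stmtAt mp.ref = some (.form χ') := hsa
          rw [stmtAt_extend_le (by omega), stmtAt_sDial, hs₁] at hsa'
          have h3 : Statement.form (χ₁.subst σ) = .form χ' := Option.some_inj.mp hsa'
          have h4 : χ₁.subst σ = χ' := by injection h3
          subst h4
          have hdef' : Defends (χ₁.subst σ) (sStmt σ mp.statement) m'.statement := hdef
          obtain ⟨s, hs, hdef₀⟩ := defends_back σ hatt₁ hdef'
          have hsm : sMove σ ⟨s, false, d.moves.length⟩ = m' := by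
            cases m' with
            | mk st' b' r' =>
              obtain rfl : b' = false := hA'
              obtain rfl : r' = d.moves.length := href
              obtain rfl : st' = sStmt σ s := hs.symm
              rfl
          have hmokd : MoveOK (d.extend ⟨s, false, d.moves.length⟩) (d.moves.length + 1)
              ⟨s, false, d.moves.length⟩ :=
            moveOK_defense (by omega) (by omega)
              (by rw [moveAt_extend_le (by omega)]; exact hmp) hmpA
              (by rw [stmtAt_extend_le (by omega)]; exact hs₁) hdef₀
          have hlegd : Legal rulesetCL (d.extend ⟨s, false, d.moves.length⟩) := by
            refine ⟨particleOK_extend hleg.1 hmokd, D10_extend hleg.2.1 ?_, ?_, ?_⟩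
            · intro hc; exact absurd hc (by omega)
            · have h13i := h13'
              rw [← hsm, ← sDial_extend] at h13i
              exact (D13_sDial σ).mp h13i
            · have hEi := hE'
              rw [← hsm, ← sDial_extend] at hEi
              exact (ERule_sDial σ).mp hEi
          have hfin := ihx ⟨s, false, d.moves.length⟩ hlegd hlegd
          rw [sDial_extend, hsm] at hfin
          exact hfin

end Simulation


/-- The set of CL-valid formulas is closed under uniform substitution. -/
theorem CL_uniform_substitution (φ : Formula) (σ : ℕ → Formula)
    (h : valid rulesetCL φ) : valid rulesetCL (φ.subst σ) := by
  exact ⟨legal_sDial σ h.1, sim σ ⟨φ, []⟩ h.2 h.1⟩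

end LorenzenDialogues
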